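/- Two complex symmetric matrix pencils λA+B and λC+D (A,B,C,D ∈ ℂ^{n×n} symmetric) are strictly equivalent (there exist invertible U,V with U(λA+B)V = λC+D, i.e., UAV = C and UBV = D) if and only if they are congruent (there exists invertible W with W^⊤AW = C and W^⊤BW = D). -/
import Mathlib

open Matrix Polynomial

/-- In a commutative ℂ-algebra, `1 + t` has a square root whenever `t` is nilpotent. -/
lemma sqrt_one_add_nilpotent {R : Type*} [CommRing R] [Algebra ℂ R] :
    ∀ (k : ℕ) (t : R), t ^ k = 0 → ∃ s : R, s * s = 1 + t := by
  intro k
  induction k using Nat.strong_induction_on with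
  | _ k ih =>
    intro t ht
    match k, ht with
    | 0, ht =>
      refine ⟨0, ?_⟩
      have h1 : (1 : R) = 0 := by simpa using ht
      calc (0:R) * 0 = 0 := by ring
        _ = 1 * (1 + t) := by rw [h1]; ring
        _ = 1 + t := by ring
    | 1, ht =>
      exact ⟨1, by simp [pow_one] at ht; simp [ht]⟩
    | (m+2), ht =>
      set h : R := algebraMap ℂ R (1/2) with hh
      have hnil : ((h * t) ^ (m+2) : R) = 0 := by
        rw [mul_pow, ht, mul_zero]
      have hs0 : IsUnit (1 + h * t) := IsNilpotent.isUnit_one_add ⟨m+2, hnil⟩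
      obtain ⟨u, hu⟩ := hs0
      set t' : R := -(↑u⁻¹ * ↑u⁻¹ * (h * h * (t * t))) with ht'
      have htt : (t * t) ^ (m+1) = 0 := by
        rw [← pow_two, ← pow_mul]
        have : t ^ (2 * (m+1)) = t ^ (m+2) * t ^ m := by ring
        rw [this, ht, zero_mul]
      have ht'nil : t' ^ (m+1) = 0 := by
        have : t' = (-(↑u⁻¹ * ↑u⁻¹ * (h * h))) * (t * t) := by rw [ht']; ring
        rw [this, mul_pow, htt, mul_zero]
      obtain ⟨r, hr⟩ := ih (m+1) (by omega) t' ht'nil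
      refine ⟨(1 + h * t) * r, ?_⟩
      have huu : ((u : R) * ↑u⁻¹) = 1 := by
        rw [← Units.val_mul, mul_inv_cancel, Units.val_one]
      have h2 : h + h = 1 := by
        rw [hh, ← map_add, ← map_one (algebraMap ℂ R)]
        norm_num
      have key : (1 + h * t) * (1 + h * t) * t' = -(h * h * (t * t)) := by
        rw [ht', ← hu]
        calc (u:R) * ↑u * -(↑u⁻¹ * ↑u⁻¹ * (h * h * (t * t)))
            = -(((u:R) * ↑u⁻¹) * ((u:R) * ↑u⁻¹) * (h * h * (t * t))) := by ring
          _ = -(h * h * (t * t)) := by rw [huu]; ring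
      calc (1 + h * t) * r * ((1 + h * t) * r)
          = (1 + h * t) * (1 + h * t) * (r * r) := by ring
        _ = (1 + h * t) * (1 + h * t) * (1 + t') := by rw [hr]
        _ = (1 + h * t) * (1 + h * t) + (1 + h * t) * (1 + h * t) * t' := by ring
        _ = (1 + h * t) * (1 + h * t) + -(h * h * (t * t)) := by rw [key]
        _ = 1 + (h + h) * t := by ring
        _ = 1 + t := by rw [h2, one_mul]


/-- Local square root of `X` modulo `(X - λ)^m` for `λ ≠ 0`. -/
lemma local_sqrt (lam : ℂ) (hlam : lam ≠ 0) (m : ℕ) :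
    ∃ p : ℂ[X], (X - C lam) ^ m ∣ p * p - X := by
  set I : Ideal ℂ[X] := Ideal.span {(X - C lam) ^ m} with hI
  set Q := ℂ[X] ⧸ I
  set mk : ℂ[X] →ₐ[ℂ] Q := Ideal.Quotient.mkₐ ℂ I with hmk
  have htnil : (mk (X - C lam)) ^ m = 0 := by
    rw [← map_pow, hmk, Ideal.Quotient.mkₐ_eq_mk, Ideal.Quotient.eq_zero_iff_mem]
    exact Ideal.subset_span rfl
  obtain ⟨mu, hmu⟩ : ∃ mu : ℂ, mu ^ 2 = lam := IsAlgClosed.exists_pow_nat_eq lam two_pos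
  have hmu0 : mu ≠ 0 := fun h => hlam (by rw [← hmu, h]; ring)
  -- t₁ = λ⁻¹ * (X - λ) in Q, nilpotent
  set t1 : Q := algebraMap ℂ Q lam⁻¹ * mk (X - C lam) with ht1
  have ht1nil : t1 ^ m = 0 := by rw [ht1, mul_pow, htnil, mul_zero]
  obtain ⟨s, hs⟩ := sqrt_one_add_nilpotent m t1 ht1nil
  obtain ⟨p0, hp0⟩ := Ideal.Quotient.mkₐ_surjective ℂ I s
  refine ⟨C mu * p0, ?_⟩
  rw [← Ideal.mem_span_singleton, ← hI, ← Ideal.Quotient.eq_zero_iff_mem]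
  have : (Ideal.Quotient.mk I) (C mu * p0 * (C mu * p0) - X) = mk (C mu * p0 * (C mu * p0) - X) := rfl
  rw [this, map_sub, _root_.map_mul, _root_.map_mul]
  have hCmu : mk (C mu) = algebraMap ℂ Q mu := by
    rw [Polynomial.C_eq_algebraMap]; exact mk.commutes mu
  rw [← hmk] at hp0
  rw [hCmu, hp0]
  have hClam : mk (C lam) = algebraMap ℂ Q lam := by
    rw [Polynomial.C_eq_algebraMap]; exact mk.commutes lam
  have hmkX : mk X = algebraMap ℂ Q lam + mk (X - C lam) := by
    rw [← hClam, ← map_add]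
    congr 1
    ring
  rw [hmkX]
  have hlaminv : algebraMap ℂ Q lam * algebraMap ℂ Q lam⁻¹ = 1 := by
    rw [← _root_.map_mul, mul_inv_cancel₀ hlam, _root_.map_one]
  have hmusq : algebraMap ℂ Q mu * algebraMap ℂ Q mu = algebraMap ℂ Q lam := by
    rw [← _root_.map_mul, ← pow_two, hmu]
  calc algebraMap ℂ Q mu * s * (algebraMap ℂ Q mu * s)
        - (algebraMap ℂ Q lam + mk (X - C lam))
      = algebraMap ℂ Q lam * (1 + algebraMap ℂ Q lam⁻¹ * mk (X - C lam))
        - (algebraMap ℂ Q lam + mk (X - C lam)) := by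
        rw [show algebraMap ℂ Q mu * s * (algebraMap ℂ Q mu * s)
            = (algebraMap ℂ Q mu * algebraMap ℂ Q mu) * (s * s) by ring, hmusq, hs]
    _ = (algebraMap ℂ Q lam * algebraMap ℂ Q lam⁻¹) * mk (X - C lam) - mk (X - C lam) := by ring
    _ = 0 := by rw [hlaminv]; ring


lemma global_sqrt : ∀ (N : ℕ) (q : ℂ[X]), q.natDegree ≤ N → q ≠ 0 → q.eval 0 ≠ 0 →
    ∃ p : ℂ[X], q ∣ p * p - X := by
  intro N
  induction N with
  | zero =>
    intro q hdeg hq0 _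
    have : q = C (q.coeff 0) := Polynomial.eq_C_of_natDegree_eq_zero (Nat.le_zero.mp hdeg)
    have hu : IsUnit q := by
      rw [this]
      exact (Polynomial.isUnit_C).mpr (isUnit_iff_ne_zero.mpr (fun h => hq0 (by rw [this, h, map_zero])))
    exact ⟨0, hu.dvd⟩
  | succ N ih =>
    intro q hdeg hq0 hqe
    by_cases hd : q.natDegree = 0
    · have : q = C (q.coeff 0) := Polynomial.eq_C_of_natDegree_eq_zero hd
      have hu : IsUnit q := by
        rw [this]
        exact (Polynomial.isUnit_C).mpr (isUnit_iff_ne_zero.mpr (fun h => hq0 (by rw [this, h, map_zero])))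
      exact ⟨0, hu.dvd⟩
    -- q has a root lam
    obtain ⟨lam, hlam⟩ : ∃ z, q.IsRoot z := by
      apply Complex.exists_root
      rw [Polynomial.degree_eq_natDegree hq0]
      exact_mod_cast Nat.pos_of_ne_zero hd
    have hlam0 : lam ≠ 0 := fun h => hqe (by rwa [h] at hlam)
    set m := q.rootMultiplicity lam with hm
    obtain ⟨q', hq', hnd⟩ := q.exists_eq_pow_rootMultiplicity_mul_and_not_dvd hq0 lam
    have hm1 : 1 ≤ m := (Polynomial.rootMultiplicity_pos hq0).mpr hlam
    have hq'0 : q' ≠ 0 := by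
      intro h; rw [h, mul_zero] at hq'; exact hq0 hq'
    have hdegq : q.natDegree = m + q'.natDegree := by
      rw [hq', Polynomial.natDegree_mul (pow_ne_zero _ (Polynomial.X_sub_C_ne_zero lam)) hq'0,
        Polynomial.natDegree_pow, Polynomial.natDegree_X_sub_C, mul_one]
    have hq'deg : q'.natDegree ≤ N := by omega
    have hq'e : q'.eval 0 ≠ 0 := by
      intro h
      apply hqe
      rw [hq', Polynomial.eval_mul, h, mul_zero]
    obtain ⟨p2, hp2⟩ := ih q' hq'deg hq'0 hq'e
    obtain ⟨p1, hp1⟩ := local_sqrt lam hlam0 m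
    -- coprimality
    have hcop : IsCoprime ((X - C lam) ^ m) q' :=
      ((Polynomial.irreducible_X_sub_C lam).coprime_iff_not_dvd.mpr hnd).pow_left
    obtain ⟨u, v, huv⟩ := id hcop
    set a := (X - C lam) ^ m
    set p := p2 * u * a + p1 * v * q' with hp
    have hdvd1 : a ∣ p - p1 := ⟨p2 * u - p1 * u, by rw [hp]; linear_combination p1 * huv⟩
    have hdvd2 : q' ∣ p - p2 := ⟨p1 * v - p2 * v, by rw [hp]; linear_combination p2 * huv⟩
    have key : ∀ (x pp : ℂ[X]), x ∣ p - pp → x ∣ pp * pp - X → x ∣ p * p - X := by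
      intro x pp h1 h2
      have : p * p - X = (p - pp) * (p + pp) + (pp * pp - X) := by ring
      rw [this]
      exact dvd_add (Dvd.dvd.mul_right h1 _) h2
    have hd1 : a ∣ p * p - X := key a p1 hdvd1 hp1
    have hd2 : q' ∣ p * p - X := key q' p2 hdvd2 hp2
    exact ⟨p, hq' ▸ hcop.mul_dvd hd1 hd2⟩


/-- Every invertible complex matrix has a square root which is a polynomial in it. -/
lemma matrix_sqrt {n : ℕ} (T : Matrix (Fin n) (Fin n) ℂ) (hT : IsUnit T.det) :
    ∃ p : ℂ[X], (aeval T p) * (aeval T p) = T := by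
  set q := T.charpoly with hq
  have hq0 : q ≠ 0 := T.charpoly_monic.ne_zero
  have hqe : q.eval 0 ≠ 0 := by
    rw [← Polynomial.coeff_zero_eq_eval_zero]
    intro h
    have := T.det_eq_sign_charpoly_coeff
    rw [← hq, h, mul_zero] at this
    exact (hT.ne_zero) this
  obtain ⟨p, c, hc⟩ := global_sqrt q.natDegree q le_rfl hq0 hqe
  refine ⟨p, ?_⟩
  have := congrArg (aeval T) hc
  rw [map_sub, _root_.map_mul, Polynomial.aeval_X, _root_.map_mul, hq, Matrix.aeval_self_charpoly,
    zero_mul] at this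
  rw [← sub_eq_zero]
  exact this

lemma aeval_comm {n : ℕ} (T M : Matrix (Fin n) (Fin n) ℂ) (h : T * M = M * Tᵀ) (p : ℂ[X]) :
    aeval T p * M = M * (aeval T p)ᵀ := by
  have hpow : ∀ k : ℕ, T ^ k * M = M * (Tᵀ) ^ k := by
    intro k
    induction k with
    | zero => simp
    | succ k ih =>
      calc T ^ (k+1) * M = T ^ k * (T * M) := by rw [pow_succ, mul_assoc]
        _ = T ^ k * M * Tᵀ := by rw [h, mul_assoc]
        _ = M * (Tᵀ ^ k * Tᵀ) := by rw [ih, mul_assoc]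
        _ = M * Tᵀ ^ (k+1) := by rw [← pow_succ]
  induction p using Polynomial.induction_on' with
  | add p q hp hq =>
    rw [map_add, add_mul, hp, hq, Matrix.transpose_add, mul_add]
  | monomial k a =>
    rw [Polynomial.aeval_monomial]
    have h1 : (algebraMap ℂ (Matrix (Fin n) (Fin n) ℂ)) a * T ^ k = a • T ^ k :=
      (Algebra.smul_def a (T ^ k)).symm
    rw [h1, Matrix.transpose_smul, smul_mul_assoc, mul_smul_comm, Matrix.transpose_pow, hpow]



/-- Two complex symmetric matrix pencils `λA + B` and `λC + D` are strictly equivalent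
if and only if they are congruent. -/
theorem stmt3 (n : ℕ) (A B C D : Matrix (Fin n) (Fin n) ℂ)
    (hA : A.IsSymm) (hB : B.IsSymm) (hC : C.IsSymm) (hD : D.IsSymm) :
    (∃ U V : Matrix (Fin n) (Fin n) ℂ, IsUnit U.det ∧ IsUnit V.det ∧
      U * A * V = C ∧ U * B * V = D) ↔
    (∃ W : Matrix (Fin n) (Fin n) ℂ, IsUnit W.det ∧
      Wᵀ * A * W = C ∧ Wᵀ * B * W = D) := by
  constructor
  · rintro ⟨U, V, hU, hV, hUA, hUB⟩
    set T := U * (V⁻¹)ᵀ with hT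
    set A₁ := Vᵀ * A * V with hA₁
    set B₁ := Vᵀ * B * V with hB₁
    have hVVt : (V⁻¹)ᵀ * Vᵀ = 1 := by
      rw [← Matrix.transpose_mul, Matrix.mul_nonsing_inv V hV, Matrix.transpose_one]
    have hTt : Tᵀ = V⁻¹ * Uᵀ := by
      rw [hT, Matrix.transpose_mul, Matrix.transpose_transpose]
    have key : ∀ (M N : Matrix (Fin n) (Fin n) ℂ), M.IsSymm → U * M * V = N → N.IsSymm →
        T * (Vᵀ * M * V) = N ∧ (Vᵀ * M * V) * Tᵀ = N := by
      intro M N hM hUMV hN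
      constructor
      · calc T * (Vᵀ * M * V) = U * ((V⁻¹)ᵀ * Vᵀ) * (M * V) := by
              rw [hT]; simp only [Matrix.mul_assoc]
          _ = U * M * V := by rw [hVVt, mul_one, ← Matrix.mul_assoc]
          _ = N := hUMV
      · calc (Vᵀ * M * V) * Tᵀ = Vᵀ * M * (V * V⁻¹) * Uᵀ := by
              rw [hTt]; simp only [Matrix.mul_assoc]
          _ = Vᵀ * M * Uᵀ := by rw [Matrix.mul_nonsing_inv V hV, mul_one]
          _ = Vᵀ * Mᵀ * Uᵀ := by rw [hM.eq]
          _ = (U * M * V)ᵀ := by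
              rw [Matrix.transpose_mul, Matrix.transpose_mul]
              simp only [Matrix.mul_assoc]
          _ = Nᵀ := by rw [hUMV]
          _ = N := hN.eq
    obtain ⟨hTA, hAT⟩ := key A C hA hUA hC
    obtain ⟨hTB, hBT⟩ := key B D hB hUB hD
    have hTdet : IsUnit T.det := by
      rw [hT, Matrix.det_mul, Matrix.det_transpose]
      exact hU.mul (V.isUnit_nonsing_inv_det hV)
    obtain ⟨p, hp⟩ := matrix_sqrt T hTdet
    set R := aeval T p with hR
    have hRdet : IsUnit R.det := by
      have : IsUnit (R.det * R.det) := by rw [← Matrix.det_mul, hp]; exact hTdet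
      exact isUnit_of_mul_isUnit_left this
    have hRA : R * A₁ = A₁ * Rᵀ := aeval_comm T A₁ (hTA.trans hAT.symm) p
    have hRB : R * B₁ = B₁ * Rᵀ := aeval_comm T B₁ (hTB.trans hBT.symm) p
    refine ⟨V * Rᵀ, ?_, ?_, ?_⟩
    · rw [Matrix.det_mul, Matrix.det_transpose]
      exact hV.mul hRdet
    · calc (V * Rᵀ)ᵀ * A * (V * Rᵀ) = R * A₁ * Rᵀ := by
            rw [Matrix.transpose_mul, Matrix.transpose_transpose, hA₁]
            simp only [Matrix.mul_assoc]
        _ = A₁ * (Rᵀ * Rᵀ) := by rw [hRA, Matrix.mul_assoc]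
        _ = A₁ * (R * R)ᵀ := by rw [Matrix.transpose_mul]
        _ = C := by rw [hp, hAT]
    · calc (V * Rᵀ)ᵀ * B * (V * Rᵀ) = R * B₁ * Rᵀ := by
            rw [Matrix.transpose_mul, Matrix.transpose_transpose, hB₁]
            simp only [Matrix.mul_assoc]
        _ = B₁ * (Rᵀ * Rᵀ) := by rw [hRB, Matrix.mul_assoc]
        _ = B₁ * (R * R)ᵀ := by rw [Matrix.transpose_mul]
        _ = D := by rw [hp, hBT]
  · rintro ⟨W, hW, h1, h2⟩
    exact ⟨Wᵀ, W, by rwa [Matrix.det_transpose], hW, h1, h2⟩
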